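/- arXiv:1603.02304 — 2 statements merged into one kernel-verified Lean document; each statement's English description precedes it below -/
import Mathlib

section
/- Let n ≥ 1 and define U: D^n × ℝ^n → ℂ (where D ⊂ ℝ² is the open unit disk) by U(x_1,y_1,…,x_n,y_n,ξ_1,…,ξ_n) = Ψ((x_1+iy_1,…,x_n+iy_n),(e^{iξ_1},…,e^{iξ_n})). Then for every index 1 ≤ j ≤ n and every point of the domain, (x_j·∂U/∂y_j - y_j·∂U/∂x_j) - ∂U/∂ξ_j + ∂U/∂ξ_{j+1} = 0, where ∂U/∂ξ_{n+1} is interpreted as 0. (The first expression is the angular derivative ∂U/∂θ_j in the polar angle θ_j of w_j = x_j + iy_j.) -/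
/-- `Ψ` composed over a list of `(w,z)` pairs, applied to `0`:
`PsiList [(w₁,z₁),…,(wₙ,zₙ)] = Ψ^{w₁}_{z₁} ∘ ⋯ ∘ Ψ^{wₙ}_{zₙ}(0)`, where
`Ψ^{w}_{z}(v) = z(v+w)/(1+conj(w)·v)`. -/
noncomputable def PsiList : List (ℂ × ℂ) → ℂ
  | [] => 0
  | wz :: rest => wz.2 * (PsiList rest + wz.1) / (1 + (starRingEnd ℂ) wz.1 * PsiList rest)

/-- `U(x₁,y₁,…,xₙ,yₙ,ξ₁,…,ξₙ) = Ψ((x₁+iy₁,…,xₙ+iyₙ),(e^{iξ₁},…,e^{iξₙ}))`. -/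
noncomputable def Ufun (n : ℕ) (x y ξ : Fin n → ℝ) : ℂ :=
  PsiList (List.ofFn fun j : Fin n =>
    ((x j : ℂ) + (y j : ℂ) * Complex.I, Complex.exp (Complex.I * (ξ j : ℂ))))

lemma key_ineq {w v : ℂ} (hw : ‖w‖ < 1) (hv : ‖v‖ < 1) :
    ‖v + w‖ < ‖1 + (starRingEnd ℂ) w * v‖ := by
  have h : Complex.normSq (1 + (starRingEnd ℂ) w * v) - Complex.normSq (v + w)
      = (1 - Complex.normSq w) * (1 - Complex.normSq v) := by
    simp only [Complex.normSq_apply, Complex.add_re, Complex.add_im, Complex.mul_re,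
      Complex.mul_im, Complex.one_re, Complex.one_im, Complex.conj_re, Complex.conj_im]
    ring
  have hww : Complex.normSq w < 1 := by
    have := Complex.sq_norm w; nlinarith [norm_nonneg w]
  have hv' : Complex.normSq v < 1 := by
    have := Complex.sq_norm v; nlinarith [norm_nonneg v]
  rw [Complex.norm_def, Complex.norm_def]
  exact Real.sqrt_lt_sqrt (Complex.normSq_nonneg _) (by nlinarith)

lemma denom_ne {w v : ℂ} (hw : ‖w‖ < 1) (hv : ‖v‖ < 1) :
    1 + (starRingEnd ℂ) w * v ≠ 0 := by
  intro h0
  have h1 := key_ineq hw hv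
  rw [h0] at h1
  simp at h1
  exact (norm_nonneg _).not_gt h1

lemma psi_abs_lt {w z v : ℂ} (hw : ‖w‖ < 1) (hz : ‖z‖ = 1)
    (hv : ‖v‖ < 1) :
    ‖z * (v + w) / (1 + (starRingEnd ℂ) w * v)‖ < 1 := by
  rw [norm_div, norm_mul, hz, one_mul, div_lt_one (norm_pos_iff.mpr (denom_ne hw hv))]
  exact key_ineq hw hv

lemma abs_mk_lt {a b : ℝ} (h : a ^ 2 + b ^ 2 < 1) :
    ‖(a : ℂ) + (b : ℂ) * Complex.I‖ < 1 := by
  have hn : Complex.normSq ((a : ℂ) + (b : ℂ) * Complex.I) = a ^ 2 + b ^ 2 := by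
    simp [Complex.normSq_apply]; ring
  rw [Complex.norm_def, hn, show (1:ℝ) = Real.sqrt 1 by simp]
  exact Real.sqrt_lt_sqrt (by positivity) (by simpa using h)

lemma conj_mk (a b : ℝ) :
    (starRingEnd ℂ) ((a : ℂ) + (b : ℂ) * Complex.I) = (a : ℂ) - (b : ℂ) * Complex.I := by
  simp [map_add, map_mul, Complex.conj_ofReal, Complex.conj_I]; ring

lemma Ufun_succ (n : ℕ) (x y ξ : Fin (n + 1) → ℝ) :
    Ufun (n + 1) x y ξ =
      Complex.exp (Complex.I * (ξ 0 : ℂ)) *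
        (Ufun n (x ∘ Fin.succ) (y ∘ Fin.succ) (ξ ∘ Fin.succ) + ((x 0 : ℂ) + (y 0 : ℂ) * Complex.I)) /
      (1 + ((x 0 : ℂ) - (y 0 : ℂ) * Complex.I) *
        Ufun n (x ∘ Fin.succ) (y ∘ Fin.succ) (ξ ∘ Fin.succ)) := by
  rw [Ufun, List.ofFn_succ, PsiList, conj_mk]
  rfl

lemma Ufun_zero (x y ξ : Fin 0 → ℝ) : Ufun 0 x y ξ = 0 := by
  simp [Ufun, PsiList]

lemma Ufun_lt_one : ∀ (n : ℕ) (x y ξ : Fin n → ℝ),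
    (∀ j, x j ^ 2 + y j ^ 2 < 1) → ‖Ufun n x y ξ‖ < 1 := by
  intro n
  induction n with
  | zero => intro x y ξ _; simp [Ufun_zero]
  | succ m ih =>
    intro x y ξ hxy
    rw [Ufun_succ, ← conj_mk]
    exact psi_abs_lt (abs_mk_lt (hxy 0)) (by simp [Complex.norm_exp])
      (ih _ _ _ fun j => hxy j.succ)

lemma psi_hasDerivAt (w ww z u : ℂ) (hd : 1 + w * u ≠ 0) :
    HasDerivAt (fun v : ℂ => z * (v + ww) / (1 + w * v))
      ((z * (1 + w * u) - z * (u + ww) * w) / (1 + w * u) ^ 2) u := by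
  have h1 : HasDerivAt (fun v : ℂ => z * (v + ww)) z u := by
    simpa using ((hasDerivAt_id u).add_const ww).const_mul z
  have h2 : HasDerivAt (fun v : ℂ => 1 + w * v) w u := by
    simpa using ((hasDerivAt_id u).const_mul w).const_add 1
  exact h1.div h2 hd

lemma ofReal_hasDerivAt (t : ℝ) : HasDerivAt (fun s : ℝ => (s : ℂ)) 1 t := by
  exact Complex.ofRealCLM.hasDerivAt (x := t)

lemma one_add_ne {a b : ℂ} (h : ‖a‖ * ‖b‖ < 1) : 1 + a * b ≠ 0 := by
  intro h0
  have : a * b = -1 := by linear_combination h0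
  rw [← norm_mul, this] at h
  simp at h

lemma update_comp_zero {n : ℕ} (y : Fin (n + 1) → ℝ) (t : ℝ) :
    Function.update y 0 t ∘ Fin.succ = y ∘ Fin.succ := by
  funext i; exact Function.update_of_ne (Fin.succ_ne_zero i) _ _

lemma update_comp_succ {n : ℕ} (y : Fin (n + 1) → ℝ) (i : Fin n) (t : ℝ) :
    Function.update y i.succ t ∘ Fin.succ = Function.update (y ∘ Fin.succ) i t := by
  funext a
  simp [Function.comp, Function.update_apply, Fin.succ_inj]

lemma update_succ_zero {n : ℕ} (y : Fin (n + 1) → ℝ) (i : Fin n) (t : ℝ) :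
    Function.update y i.succ t 0 = y 0 :=
  Function.update_of_ne (Fin.succ_ne_zero i).symm _ _

lemma key : ∀ (n : ℕ) (x y ξ : Fin n → ℝ), (∀ j, x j ^ 2 + y j ^ 2 < 1) → ∀ (j : Fin n),
    ∃ Dy Dx D1 D2 : ℂ,
      HasDerivAt (fun t : ℝ => Ufun n x (Function.update y j t) ξ) Dy (y j) ∧
      HasDerivAt (fun t : ℝ => Ufun n (Function.update x j t) y ξ) Dx (x j) ∧
      HasDerivAt (fun t : ℝ => Ufun n x y (Function.update ξ j t)) D1 (ξ j) ∧
      (∀ h : (j : ℕ) + 1 < n,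
        HasDerivAt (fun t : ℝ => Ufun n x y (Function.update ξ ⟨(j : ℕ) + 1, h⟩ t)) D2
          (ξ ⟨(j : ℕ) + 1, h⟩)) ∧
      (¬ ((j : ℕ) + 1 < n) → D2 = 0) ∧
      (x j : ℂ) * Dy - (y j : ℂ) * Dx - D1 + D2 = 0 := by
  intro n
  induction n with
  | zero => intro _ _ _ _ j; exact absurd j.2 (by omega)
  | succ m ih =>
    intro x y ξ hxy j
    induction j using Fin.cases with
    | zero =>
      set V := Ufun m (x ∘ Fin.succ) (y ∘ Fin.succ) (ξ ∘ Fin.succ) with hVdef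
      have hV : ‖V‖ < 1 := Ufun_lt_one m _ _ _ (fun k => hxy k.succ)
      have hw : ‖(x 0 : ℂ) + (y 0 : ℂ) * Complex.I‖ < 1 := abs_mk_lt (hxy 0)
      have hd : 1 + ((x 0 : ℂ) - (y 0 : ℂ) * Complex.I) * V ≠ 0 := by
        rw [← conj_mk]
        exact one_add_ne (by
          rw [Complex.norm_conj]
          nlinarith [norm_nonneg ((x 0 : ℂ) + (y 0 : ℂ) * Complex.I),
            norm_nonneg V])
      -- y-derivative
      have hfy : (fun t : ℝ => Ufun (m + 1) x (Function.update y 0 t) ξ) =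
          fun t : ℝ => Complex.exp (Complex.I * ((ξ 0 : ℝ) : ℂ)) *
              (V + ((x 0 : ℂ) + (t : ℂ) * Complex.I)) /
            (1 + ((x 0 : ℂ) - (t : ℂ) * Complex.I) * V) := by
        funext t
        rw [Ufun_succ, update_comp_zero, Function.update_self]
      have hnumy : HasDerivAt (fun t : ℝ => Complex.exp (Complex.I * ((ξ 0 : ℝ) : ℂ)) *
          (V + ((x 0 : ℂ) + (t : ℂ) * Complex.I)))
          (Complex.exp (Complex.I * ((ξ 0 : ℝ) : ℂ)) * (1 * Complex.I)) (y 0) :=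
        ((((ofReal_hasDerivAt (y 0)).mul_const Complex.I).const_add
          ((x 0 : ℂ))).const_add V).const_mul _
      have hdeny : HasDerivAt (fun t : ℝ => 1 + ((x 0 : ℂ) - (t : ℂ) * Complex.I) * V)
          (-(1 * Complex.I) * V) (y 0) :=
        ((((ofReal_hasDerivAt (y 0)).mul_const Complex.I).const_sub
          ((x 0 : ℂ))).mul_const V).const_add 1
      have Hy := hnumy.div hdeny hd
      simp only [Pi.div_def] at Hy
      rw [← hfy] at Hy
      -- x-derivative
      have hfx : (fun t : ℝ => Ufun (m + 1) (Function.update x 0 t) y ξ) =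
          fun t : ℝ => Complex.exp (Complex.I * ((ξ 0 : ℝ) : ℂ)) *
              (V + ((t : ℂ) + (y 0 : ℂ) * Complex.I)) /
            (1 + ((t : ℂ) - (y 0 : ℂ) * Complex.I) * V) := by
        funext t
        rw [Ufun_succ, update_comp_zero, Function.update_self]
      have hnumx : HasDerivAt (fun t : ℝ => Complex.exp (Complex.I * ((ξ 0 : ℝ) : ℂ)) *
          (V + ((t : ℂ) + (y 0 : ℂ) * Complex.I)))
          (Complex.exp (Complex.I * ((ξ 0 : ℝ) : ℂ)) * 1) (x 0) :=
        ((((ofReal_hasDerivAt (x 0)).add_const ((y 0 : ℂ) * Complex.I)).const_add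
          V).const_mul _)
      have hdenx : HasDerivAt (fun t : ℝ => 1 + ((t : ℂ) - (y 0 : ℂ) * Complex.I) * V)
          (1 * V) (x 0) :=
        (((ofReal_hasDerivAt (x 0)).sub_const ((y 0 : ℂ) * Complex.I)).mul_const V).const_add 1
      have Hx := hnumx.div hdenx hd
      simp only [Pi.div_def] at Hx
      rw [← hfx] at Hx
      -- ξ-derivative
      have hf1 : (fun t : ℝ => Ufun (m + 1) x y (Function.update ξ 0 t)) =
          fun t : ℝ => Complex.exp (Complex.I * (t : ℂ)) *
              (V + ((x 0 : ℂ) + (y 0 : ℂ) * Complex.I)) /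
            (1 + ((x 0 : ℂ) - (y 0 : ℂ) * Complex.I) * V) := by
        funext t
        rw [Ufun_succ, update_comp_zero, Function.update_self]
      have hexp1 : HasDerivAt (fun t : ℝ => Complex.exp (Complex.I * (t : ℂ)))
          (Complex.exp (Complex.I * ((ξ 0 : ℝ) : ℂ)) * (Complex.I * 1)) (ξ 0) :=
        ((ofReal_hasDerivAt (ξ 0)).const_mul Complex.I).cexp
      have H1 := (hexp1.mul_const (V + ((x 0 : ℂ) + (y 0 : ℂ) * Complex.I))).div_const
        (1 + ((x 0 : ℂ) - (y 0 : ℂ) * Complex.I) * V)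
      rw [← hf1] at H1
      -- outer map derivative
      have hΦ : HasDerivAt (fun v : ℂ => Complex.exp (Complex.I * ((ξ 0 : ℝ) : ℂ)) *
            (v + ((x 0 : ℂ) + (y 0 : ℂ) * Complex.I)) /
            (1 + ((x 0 : ℂ) - (y 0 : ℂ) * Complex.I) * v))
          ((Complex.exp (Complex.I * ((ξ 0 : ℝ) : ℂ)) *
              (1 + ((x 0 : ℂ) - (y 0 : ℂ) * Complex.I) * V) -
            Complex.exp (Complex.I * ((ξ 0 : ℝ) : ℂ)) *
              (V + ((x 0 : ℂ) + (y 0 : ℂ) * Complex.I)) *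
              ((x 0 : ℂ) - (y 0 : ℂ) * Complex.I)) /
            (1 + ((x 0 : ℂ) - (y 0 : ℂ) * Complex.I) * V) ^ 2) V :=
        psi_hasDerivAt _ _ _ V hd
      refine ⟨_, _, _, Complex.I * V *
        ((Complex.exp (Complex.I * ((ξ 0 : ℝ) : ℂ)) *
            (1 + ((x 0 : ℂ) - (y 0 : ℂ) * Complex.I) * V) -
          Complex.exp (Complex.I * ((ξ 0 : ℝ) : ℂ)) *
            (V + ((x 0 : ℂ) + (y 0 : ℂ) * Complex.I)) *
            ((x 0 : ℂ) - (y 0 : ℂ) * Complex.I)) /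
          (1 + ((x 0 : ℂ) - (y 0 : ℂ) * Complex.I) * V) ^ 2),
        Hy, Hx, H1, ?_, ?_, ?_⟩
      · intro h
        have hm : 0 < m := by simp at h; omega
        obtain ⟨m', rfl⟩ := Nat.exists_eq_succ_of_ne_zero hm.ne'
        have hidx : (⟨(↑(0 : Fin (m' + 1 + 1)) : ℕ) + 1, h⟩ : Fin (m' + 1 + 1)) =
            (0 : Fin (m' + 1)).succ := by
          ext; simp
        rw [hidx]
        have hfG : (fun t : ℝ => Ufun (m' + 1 + 1) x y
              (Function.update ξ (0 : Fin (m' + 1)).succ t)) =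
            (fun v : ℂ => Complex.exp (Complex.I * ((ξ 0 : ℝ) : ℂ)) *
                (v + ((x 0 : ℂ) + (y 0 : ℂ) * Complex.I)) /
                (1 + ((x 0 : ℂ) - (y 0 : ℂ) * Complex.I) * v)) ∘
              (fun t : ℝ => Ufun (m' + 1) (x ∘ Fin.succ) (y ∘ Fin.succ)
                (Function.update (ξ ∘ Fin.succ) 0 t)) := by
          funext t
          rw [Function.comp_apply, Ufun_succ, update_succ_zero ξ _ t, update_comp_succ]
        have hfG2 : (fun t : ℝ => Ufun (m' + 1) (x ∘ Fin.succ) (y ∘ Fin.succ)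
              (Function.update (ξ ∘ Fin.succ) 0 t)) =
            fun t : ℝ => Complex.exp (Complex.I * (t : ℂ)) *
                (Ufun m' ((x ∘ Fin.succ) ∘ Fin.succ) ((y ∘ Fin.succ) ∘ Fin.succ)
                    ((ξ ∘ Fin.succ) ∘ Fin.succ) +
                  (((x ∘ Fin.succ) 0 : ℂ) + ((y ∘ Fin.succ) 0 : ℂ) * Complex.I)) /
              (1 + (((x ∘ Fin.succ) 0 : ℂ) - ((y ∘ Fin.succ) 0 : ℂ) * Complex.I) *
                Ufun m' ((x ∘ Fin.succ) ∘ Fin.succ) ((y ∘ Fin.succ) ∘ Fin.succ)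
                  ((ξ ∘ Fin.succ) ∘ Fin.succ)) := by
          funext t
          rw [Ufun_succ, update_comp_zero, Function.update_self]
        have hexp2 : HasDerivAt (fun t : ℝ => Complex.exp (Complex.I * (t : ℂ)))
            (Complex.exp (Complex.I * (((ξ ∘ Fin.succ) 0 : ℝ) : ℂ)) * (Complex.I * 1))
            ((ξ ∘ Fin.succ) 0) :=
          ((ofReal_hasDerivAt ((ξ ∘ Fin.succ) 0)).const_mul Complex.I).cexp
        have hG0 := (hexp2.mul_const
            (Ufun m' ((x ∘ Fin.succ) ∘ Fin.succ) ((y ∘ Fin.succ) ∘ Fin.succ)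
                ((ξ ∘ Fin.succ) ∘ Fin.succ) +
              (((x ∘ Fin.succ) 0 : ℂ) + ((y ∘ Fin.succ) 0 : ℂ) * Complex.I))).div_const
          (1 + (((x ∘ Fin.succ) 0 : ℂ) - ((y ∘ Fin.succ) 0 : ℂ) * Complex.I) *
            Ufun m' ((x ∘ Fin.succ) ∘ Fin.succ) ((y ∘ Fin.succ) ∘ Fin.succ)
              ((ξ ∘ Fin.succ) ∘ Fin.succ))
        rw [← hfG2] at hG0
        have hG : HasDerivAt (fun t : ℝ => Ufun (m' + 1) (x ∘ Fin.succ) (y ∘ Fin.succ)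
            (Function.update (ξ ∘ Fin.succ) 0 t)) (Complex.I * V) ((ξ ∘ Fin.succ) 0) := by
          refine hG0.congr_deriv ?_
          rw [hVdef, Ufun_succ]
          ring
        have hcomp := hΦ.scomp_of_eq ((ξ ∘ Fin.succ) 0) hG
          (by rw [Function.update_eq_self, hVdef])
        rw [← hfG] at hcomp
        exact hcomp
      · intro h
        have hm : m = 0 := by simp at h; omega
        subst hm
        have hV0 : V = 0 := by rw [hVdef, Ufun_zero]
        rw [hV0]
        ring
      · rw [hVdef] at hd ⊢
        have h2 : Complex.I ^ 2 = -1 := Complex.I_sq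
        have h3 : Complex.I ^ 3 = -Complex.I := by
          rw [(by norm_num : 3 = 2 + 1), pow_add, Complex.I_sq]; ring
        have h4 : Complex.I ^ 4 = 1 := Complex.I_pow_four
        have h5 : Complex.I ^ 5 = Complex.I := by
          rw [(by norm_num : 5 = 4 + 1), pow_add, Complex.I_pow_four]; ring
        have h6 : Complex.I ^ 6 = -1 := by
          rw [(by norm_num : 6 = 4 + 2), pow_add, Complex.I_pow_four, Complex.I_sq]; ring
        field_simp [hd]
        ring_nf
        simp only [h2, h3, h4, h5, h6]
        ring
    | succ i =>
      obtain ⟨Dy, Dx, D1, D2, hDy, hDx, hD1, hD2, hD2z, hcomb⟩ :=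
        ih (x ∘ Fin.succ) (y ∘ Fin.succ) (ξ ∘ Fin.succ) (fun k => hxy k.succ) i
      set V := Ufun m (x ∘ Fin.succ) (y ∘ Fin.succ) (ξ ∘ Fin.succ) with hVdef
      have hV : ‖V‖ < 1 := Ufun_lt_one m _ _ _ (fun k => hxy k.succ)
      have hw : ‖(x 0 : ℂ) + (y 0 : ℂ) * Complex.I‖ < 1 := abs_mk_lt (hxy 0)
      have hd : 1 + ((x 0 : ℂ) - (y 0 : ℂ) * Complex.I) * V ≠ 0 := by
        rw [← conj_mk]
        exact one_add_ne (by
          rw [Complex.norm_conj]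
          nlinarith [norm_nonneg ((x 0 : ℂ) + (y 0 : ℂ) * Complex.I),
            norm_nonneg V])
      set z := Complex.exp (Complex.I * (ξ 0 : ℂ)) with hzdef
      set w := (x 0 : ℂ) + (y 0 : ℂ) * Complex.I with hwdef
      set cw := (x 0 : ℂ) - (y 0 : ℂ) * Complex.I with hcwdef
      set c0 := (z * (1 + cw * V) - z * (V + w) * cw) / (1 + cw * V) ^ 2 with hc0def
      have hΦ : HasDerivAt (fun v : ℂ => z * (v + w) / (1 + cw * v)) c0 V :=
        psi_hasDerivAt cw w z V hd
      have comp_eq : ∀ (y' ξ' : Fin (m + 1) → ℝ), y' 0 = y 0 → ξ' 0 = ξ 0 →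
          Ufun (m + 1) x y' ξ' =
            (fun v : ℂ => z * (v + w) / (1 + cw * v))
              (Ufun m (x ∘ Fin.succ) (y' ∘ Fin.succ) (ξ' ∘ Fin.succ)) := by
        intro y' ξ' h1 h2
        rw [Ufun_succ, h1, h2]
      refine ⟨Dy * c0, Dx * c0, D1 * c0, D2 * c0, ?_, ?_, ?_, ?_, ?_, ?_⟩
      · have hfe : (fun t : ℝ => Ufun (m + 1) x (Function.update y i.succ t) ξ) =
            (fun v : ℂ => z * (v + w) / (1 + cw * v)) ∘
              (fun t : ℝ => Ufun m (x ∘ Fin.succ)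
                (Function.update (y ∘ Fin.succ) i t) (ξ ∘ Fin.succ)) := by
          funext t
          rw [Function.comp_apply, comp_eq _ _ (update_succ_zero y i t) rfl,
            update_comp_succ]
        rw [hfe]
        have := hΦ.scomp_of_eq ((y ∘ Fin.succ) i) hDy (by rw [Function.update_eq_self])
        simpa [smul_eq_mul] using this
      · have hfe : (fun t : ℝ => Ufun (m + 1) (Function.update x i.succ t) y ξ) =
            (fun v : ℂ => z * (v + w) / (1 + cw * v)) ∘
              (fun t : ℝ => Ufun m (Function.update (x ∘ Fin.succ) i t)
                (y ∘ Fin.succ) (ξ ∘ Fin.succ)) := by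
          funext t
          rw [Function.comp_apply, Ufun_succ, update_succ_zero x i t, update_comp_succ]
        rw [hfe]
        have := hΦ.scomp_of_eq ((x ∘ Fin.succ) i) hDx (by rw [Function.update_eq_self])
        simpa [smul_eq_mul] using this
      · have hfe : (fun t : ℝ => Ufun (m + 1) x y (Function.update ξ i.succ t)) =
            (fun v : ℂ => z * (v + w) / (1 + cw * v)) ∘
              (fun t : ℝ => Ufun m (x ∘ Fin.succ) (y ∘ Fin.succ)
                (Function.update (ξ ∘ Fin.succ) i t)) := by
          funext t
          rw [Function.comp_apply, comp_eq _ _ rfl (update_succ_zero ξ i t),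
            update_comp_succ]
        rw [hfe]
        have := hΦ.scomp_of_eq ((ξ ∘ Fin.succ) i) hD1 (by rw [Function.update_eq_self])
        simpa [smul_eq_mul] using this
      · intro h
        have h' : (i : ℕ) + 1 < m := by
          simpa [Fin.val_succ] using Nat.lt_of_succ_lt_succ (by simpa using h)
        have hidx : (⟨(↑i.succ : ℕ) + 1, h⟩ : Fin (m + 1)) =
            (⟨(i : ℕ) + 1, h'⟩ : Fin m).succ := by
          ext; simp [Fin.val_succ]
        rw [hidx]
        have hfe : (fun t : ℝ => Ufun (m + 1) x y
              (Function.update ξ (⟨(i : ℕ) + 1, h'⟩ : Fin m).succ t)) =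
            (fun v : ℂ => z * (v + w) / (1 + cw * v)) ∘
              (fun t : ℝ => Ufun m (x ∘ Fin.succ) (y ∘ Fin.succ)
                (Function.update (ξ ∘ Fin.succ) ⟨(i : ℕ) + 1, h'⟩ t)) := by
          funext t
          rw [Function.comp_apply, comp_eq _ _ rfl (update_succ_zero ξ _ t),
            update_comp_succ]
        rw [hfe]
        have := hΦ.scomp_of_eq ((ξ ∘ Fin.succ) ⟨(i : ℕ) + 1, h'⟩) (hD2 h') (by rw [Function.update_eq_self])
        simpa [smul_eq_mul] using this
      · intro h
        have h' : ¬ ((i : ℕ) + 1 < m) := by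
          intro hc; exact h (by simpa [Fin.val_succ] using Nat.succ_lt_succ hc)
        rw [hD2z h', zero_mul]
      · have : ((x ∘ Fin.succ) i : ℂ) * Dy - ((y ∘ Fin.succ) i : ℂ) * Dx - D1 + D2 = 0 :=
          hcomb
        simp only [Function.comp_apply] at this
        linear_combination c0 * this

/-- for every `1 ≤ j ≤ n` and every point of `Dⁿ × ℝⁿ`,
`(x_j·∂U/∂y_j - y_j·∂U/∂x_j) - ∂U/∂ξ_j + ∂U/∂ξ_{j+1} = 0`, with `∂U/∂ξ_{n+1}`
interpreted as `0`.  (The first expression is the angular derivative `∂U/∂θ_j`.) -/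
theorem statement14 (n : ℕ) (hn : 1 ≤ n) (x y ξ : Fin n → ℝ)
    (hxy : ∀ j, (x j) ^ 2 + (y j) ^ 2 < 1) (j : Fin n) :
    ((x j : ℂ) * deriv (fun t : ℝ => Ufun n x (Function.update y j t) ξ) (y j) -
        (y j : ℂ) * deriv (fun t : ℝ => Ufun n (Function.update x j t) y ξ) (x j)) -
      deriv (fun t : ℝ => Ufun n x y (Function.update ξ j t)) (ξ j) +
      (if h : (j : ℕ) + 1 < n then
          deriv (fun t : ℝ => Ufun n x y (Function.update ξ ⟨(j : ℕ) + 1, h⟩ t))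
            (ξ ⟨(j : ℕ) + 1, h⟩)
        else 0) = 0 := by
  obtain ⟨Dy, Dx, D1, D2, hDy, hDx, hD1, hD2, hD2z, hcomb⟩ := key n x y ξ hxy j
  rw [hDy.deriv, hDx.deriv, hD1.deriv]
  by_cases h : (j : ℕ) + 1 < n
  · rw [dif_pos h, (hD2 h).deriv]
    exact hcomb
  · rw [dif_neg h]
    rw [hD2z h] at hcomb
    simpa using hcomb
end

section
/- Let n ≥ 1 and l = (l_1,…,l_n) ∈ ℤ^n. For r ∈ [0,1)^n define g_l(r) = (2π)^{-n} ∫_{[0,2π]^n} Ψ((r_1 e^{iθ_1},…,r_n e^{iθ_n}),(1,…,1)) · e^{-i(l_1θ_1+⋯+l_nθ_n)} dθ. If g_l(r) ≠ 0 for some r ∈ [0,1)^n, then: (i) for every 1 ≤ j ≤ n, l_1 + ⋯ + l_j ≤ 1; (ii) l_1 + ⋯ + l_n = 1; and (iii) for every 1 ≤ j ≤ n-1, if l_1 + ⋯ + l_j = 1 then l_1 + ⋯ + l_{j+1} = 1. -/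
open MeasureTheory

open Complex Real

noncomputable def Phi : (n : ℕ) → (Fin n → ℂ) → ℂ
  | 0, _ => 0
  | n+1, w => (Phi n (w ∘ Fin.succ) + w 0) / (1 + (starRingEnd ℂ) (w 0) * Phi n (w ∘ Fin.succ))

lemma psiList_eq_phi (n : ℕ) (w : Fin n → ℂ) :
    PsiList (List.ofFn fun j => (w j, 1)) = Phi n w := by
  induction n with
  | zero => simp [PsiList, Phi]
  | succ n ih =>
    rw [List.ofFn_succ]
    simp only [PsiList, Phi, one_mul]
    have := ih (w ∘ Fin.succ)
    simp only [Function.comp_apply] at this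
    rw [this]

lemma norm_coe_mul_exp (r θ : ℝ) (h : 0 ≤ r) :
    ‖(r : ℂ) * Complex.exp (Complex.I * (θ : ℂ))‖ = r := by
  rw [norm_mul, Complex.norm_exp, Complex.norm_real, Real.norm_eq_abs,
    _root_.abs_of_nonneg h]
  simp [Complex.mul_re]

lemma norm_div_le_one (T w : ℂ) (hT : ‖T‖ ≤ 1) (hw : ‖w‖ ≤ 1) :
    ‖(T + w) / (1 + (starRingEnd ℂ) w * T)‖ ≤ 1 := by
  rcases eq_or_ne (1 + (starRingEnd ℂ) w * T) 0 with h | h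
  · simp [h]
  · rw [norm_div, div_le_one (norm_pos_iff.2 h)]
    have hT2 : T.re * T.re + T.im * T.im ≤ 1 := by
      have : Complex.normSq T ≤ 1 := by
        rw [← Complex.sq_norm]
        exact pow_le_one₀ (norm_nonneg _) hT
      simpa [Complex.normSq_apply] using this
    have hw2 : w.re * w.re + w.im * w.im ≤ 1 := by
      have : Complex.normSq w ≤ 1 := by
        rw [← Complex.sq_norm]
        exact pow_le_one₀ (norm_nonneg _) hw
      simpa [Complex.normSq_apply] using this
    have h1 : Complex.normSq (T + w) ≤ Complex.normSq (1 + (starRingEnd ℂ) w * T) := by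
      simp only [Complex.normSq_apply, Complex.add_re, Complex.add_im, Complex.mul_re,
        Complex.mul_im, Complex.one_re, Complex.one_im, Complex.conj_re, Complex.conj_im]
      nlinarith [hT2, hw2]
    rw [Complex.norm_def, Complex.norm_def]
    exact Real.sqrt_le_sqrt h1

lemma phi_norm_le (n : ℕ) (w : Fin n → ℂ) (hw : ∀ j, ‖w j‖ ≤ 1) : ‖Phi n w‖ ≤ 1 := by
  induction n with
  | zero => simp [Phi]
  | succ n ih =>
    exact norm_div_le_one _ _ (ih _ fun j => hw j.succ) (hw 0)

lemma phi_continuous (n : ℕ) (r : Fin n → ℝ) (hr : ∀ j, 0 ≤ r j ∧ r j < 1) :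
    Continuous fun θ : Fin n → ℝ => Phi n fun j => (r j : ℂ) * Complex.exp (Complex.I * (θ j : ℂ)) := by
  induction n with
  | zero => exact continuous_const
  | succ n ih =>
    have hcont0 : Continuous fun θ : Fin (n+1) → ℝ =>
        (r 0 : ℂ) * Complex.exp (Complex.I * (θ 0 : ℂ)) := by
      fun_prop
    have hcontT : Continuous fun θ : Fin (n+1) → ℝ =>
        Phi n fun j : Fin n => (r j.succ : ℂ) * Complex.exp (Complex.I * (θ j.succ : ℂ)) := by
      have := ih (fun j => r j.succ) (fun j => hr j.succ)
      exact this.comp (continuous_pi fun j : Fin n => continuous_apply (j.succ : Fin (n+1)))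
    have hphi : (fun θ : Fin (n+1) → ℝ =>
          Phi (n+1) fun j => (r j : ℂ) * Complex.exp (Complex.I * (θ j : ℂ)))
        = fun θ : Fin (n+1) → ℝ =>
          (Phi n (fun j : Fin n => (r j.succ : ℂ) * Complex.exp (Complex.I * (θ j.succ : ℂ)))
            + (r 0 : ℂ) * Complex.exp (Complex.I * (θ 0 : ℂ)))
          / (1 + (starRingEnd ℂ) ((r 0 : ℂ) * Complex.exp (Complex.I * (θ 0 : ℂ)))
            * Phi n fun j : Fin n => (r j.succ : ℂ) * Complex.exp (Complex.I * (θ j.succ : ℂ))) := rfl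
    rw [hphi]
    apply Continuous.div
    · exact hcontT.add hcont0
    · exact continuous_const.add ((Complex.continuous_conj.comp hcont0).mul hcontT)
    · intro θ hzero
      set a := (r 0 : ℂ) * Complex.exp (Complex.I * (θ 0 : ℂ)) with ha
      set T := Phi n fun j : Fin n => (r j.succ : ℂ) * Complex.exp (Complex.I * (θ j.succ : ℂ)) with hTd
      have hTle : ‖T‖ ≤ 1 := by
        apply phi_norm_le
        intro j
        rw [norm_coe_mul_exp _ _ (hr j.succ).1]
        exact (hr j.succ).2.le
      have hb : ‖(starRingEnd ℂ) a * T‖ < 1 := by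
        rw [norm_mul, RCLike.norm_conj, ha, norm_coe_mul_exp _ _ (hr 0).1]
        calc r 0 * ‖T‖ ≤ r 0 * 1 := by
              exact mul_le_mul_of_nonneg_left hTle (hr 0).1
          _ < 1 := by simpa using (hr 0).2
      have : (starRingEnd ℂ) a * T = -1 := by linear_combination hzero
      rw [this] at hb
      simp at hb

lemma integral_exp_int (k : ℤ) :
    ∫ θ in Set.Icc (0:ℝ) (2*π), Complex.exp (Complex.I * k * θ)
      = if k = 0 then ((2*π : ℝ) : ℂ) else 0 := by
  have h2π : (0:ℝ) ≤ 2*π := by positivity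
  rw [MeasureTheory.integral_Icc_eq_integral_Ioc, ← intervalIntegral.integral_of_le h2π]
  rcases eq_or_ne k 0 with hk | hk
  · subst hk
    simp
  · rw [if_neg hk]
    have hc : (Complex.I * k : ℂ) ≠ 0 := by
      simp [Complex.I_ne_zero, Complex.ext_iff]
      exact_mod_cast hk
    rw [show (fun θ : ℝ => Complex.exp (Complex.I * k * θ)) = fun θ : ℝ =>
      Complex.exp ((Complex.I * k) * θ) from rfl]
    rw [integral_exp_mul_complex hc]
    have : Complex.exp (Complex.I * k * (2*π : ℝ)) = 1 := by
      rw [show (Complex.I * k * (2*π : ℝ) : ℂ) = (k : ℂ) * (2 * (π:ℝ) * Complex.I) by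
        push_cast; ring]
      exact Complex.exp_int_mul_two_pi_mul_I k
    rw [this]
    simp

lemma binom_integral (p : ℕ) (m : ℤ) (A : ℂ) (r : ℝ) :
    ∫ θ in Set.Icc (0:ℝ) (2*π),
        (A + (r:ℂ) * Complex.exp (Complex.I * (θ:ℂ)))^p * Complex.exp (Complex.I * (((-m : ℤ)) : ℂ) * θ)
      = if 0 ≤ m ∧ m ≤ p then
          ((p.choose m.toNat : ℂ) * (r:ℂ)^(m.toNat) * A^(p - m.toNat)) * ((2*π:ℝ):ℂ)
        else 0 := by
  have hfun : (fun θ : ℝ =>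
      (A + (r:ℂ) * Complex.exp (Complex.I * (θ:ℂ)))^p * Complex.exp (Complex.I * (((-m : ℤ)) : ℂ) * θ))
      = fun θ : ℝ => ∑ a ∈ Finset.range (p+1),
          (A^a * (r:ℂ)^(p-a) * (p.choose a : ℂ)) * Complex.exp (Complex.I * ((((p:ℤ) - a - m) : ℤ) : ℂ) * θ) := by
    funext θ
    rw [add_pow, Finset.sum_mul]
    apply Finset.sum_congr rfl
    intro a ha
    rw [mul_pow, ← Complex.exp_nat_mul]
    rw [show (Complex.I * ((((p:ℤ) - a - m) : ℤ) : ℂ) * θ : ℂ)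
        = ((p - a : ℕ) : ℂ) * (Complex.I * θ) + Complex.I * (((-m : ℤ)) : ℂ) * θ by
      have hap : a ≤ p := by
        have := Finset.mem_range.1 ha; omega
      push_cast [hap]
      ring]
    rw [Complex.exp_add]
    ring
  rw [hfun]
  rw [MeasureTheory.integral_finset_sum]
  · have hterm : ∀ a ∈ Finset.range (p+1),
        ∫ θ in Set.Icc (0:ℝ) (2*π),
          (A^a * (r:ℂ)^(p-a) * (p.choose a : ℂ)) * Complex.exp (Complex.I * ((((p:ℤ) - a - m) : ℤ) : ℂ) * θ)
        = (A^a * (r:ℂ)^(p-a) * (p.choose a : ℂ))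
            * (if ((p:ℤ) - a - m) = 0 then ((2*π:ℝ):ℂ) else 0) := by
      intro a _
      rw [MeasureTheory.integral_const_mul, integral_exp_int]
    rw [Finset.sum_congr rfl hterm]
    rcases em (0 ≤ m ∧ m ≤ p) with hm | hm
    · rw [if_pos hm]
      rw [Finset.sum_eq_single (p - m.toNat)]
      · have h1 : ((p:ℤ) - (p - m.toNat : ℕ) - m) = 0 := by omega
        rw [if_pos h1]
        have h2 : p - (p - m.toNat) = m.toNat := by omega
        have h3 : p.choose (p - m.toNat) = p.choose m.toNat :=
          Nat.choose_symm (by omega)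
        rw [h2, h3]
        ring
      · intro a ha hne
        have : ¬ ((p:ℤ) - a - m = 0) := by
          have := Finset.mem_range.1 ha
          omega
        rw [if_neg this, mul_zero]
      · intro h
        exact absurd (Finset.mem_range.2 (by omega)) h
    · rw [if_neg hm]
      apply Finset.sum_eq_zero
      intro a ha
      have : ¬ ((p:ℤ) - a - m = 0) := by
        have := Finset.mem_range.1 ha
        omega
      rw [if_neg this, mul_zero]
  · intro a _
    apply Continuous.integrableOn_Icc
    fun_prop

lemma norm_exp_I_mul (t : ℝ) (k : ℤ) : ‖Complex.exp (Complex.I * (k:ℂ) * (t:ℂ))‖ = 1 := by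
  rw [Complex.norm_exp]
  simp [Complex.mul_re]

lemma keyJ (p : ℕ) (l : ℤ) (r : ℝ) (hr0 : 0 ≤ r) (hr1 : r < 1) :
    ∃ c : ℂ, (p = 0 → l ≠ 0 → c = 0) ∧ ∀ A : ℂ, ‖A‖ ≤ 1 →
      ∫ θ in Set.Icc (0:ℝ) (2*π),
          ((A + (r:ℂ) * Complex.exp (Complex.I * (θ:ℂ)))
            / (1 + (starRingEnd ℂ) ((r:ℂ) * Complex.exp (Complex.I * (θ:ℂ))) * A))^p
          * Complex.exp (Complex.I * (((-l : ℤ)) : ℂ) * θ)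
        = if l ≤ (p:ℤ) then c * A^((p:ℤ) - l).toNat else 0 := by
  rcases Nat.eq_zero_or_pos p with hp | hp
  · subst hp
    refine ⟨if l = 0 then ((2*π:ℝ):ℂ) else 0, fun _ hl => if_neg hl, fun A _ => ?_⟩
    simp only [pow_zero, one_mul]
    rw [integral_exp_int (-l)]
    rcases eq_or_ne l 0 with h | h
    · simp [h]
    · simp [h, neg_eq_zero]
  · obtain ⟨q, rfl⟩ : ∃ q, p = q + 1 := ⟨p - 1, by omega⟩
    -- the coefficient
    set stuff : ℕ → ℂ := fun k =>
      ((k + q).choose q : ℂ) * (-1)^k * (r:ℂ)^k *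
        (if 0 ≤ l + k ∧ l + k ≤ ((q+1 : ℕ):ℤ) then
          (((q+1).choose (l + k).toNat : ℂ) * (r:ℂ)^((l + k).toNat)) * ((2*π:ℝ):ℂ) else 0) with hstuff
    refine ⟨∑' k, stuff k, fun h => absurd h (by omega), fun A hA => ?_⟩
    set w : ℝ → ℂ := fun θ => (r:ℂ) * Complex.exp (Complex.I * (θ:ℂ)) with hw
    have hwnorm : ∀ θ, ‖w θ‖ = r := by
      intro θ
      rw [hw]
      rw [norm_mul, Complex.norm_exp, Complex.norm_real, Real.norm_eq_abs,
        _root_.abs_of_nonneg hr0]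
      simp [Complex.mul_re]
    set x : ℝ → ℂ := fun θ => -((starRingEnd ℂ) (w θ) * A) with hx
    have hxnorm : ∀ θ, ‖x θ‖ ≤ r := by
      intro θ
      rw [hx]
      simp only [norm_neg, norm_mul, RCLike.norm_conj]
      calc ‖w θ‖ * ‖A‖ ≤ ‖w θ‖ * 1 := by
            exact mul_le_mul_of_nonneg_left hA (norm_nonneg _)
        _ = r := by rw [mul_one, hwnorm]
    have hxlt : ∀ θ, ‖x θ‖ < 1 := fun θ => lt_of_le_of_lt (hxnorm θ) hr1
    have hDne : ∀ θ, (1 + (starRingEnd ℂ) (w θ) * A) ≠ 0 := by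
      intro θ h
      have heq : (starRingEnd ℂ) (w θ) * A = -1 := by linear_combination h
      have hx1 : x θ = 1 := by
        rw [show x θ = -((starRingEnd ℂ) (w θ) * A) from rfl, heq, neg_neg]
      have := hxlt θ
      rw [hx1] at this
      simp at this
    set f : ℕ → ℝ → ℂ := fun k θ =>
      (((k + q).choose q : ℕ) : ℂ) * (x θ)^k *
        ((A + w θ)^(q+1) * Complex.exp (Complex.I * (((-l : ℤ)) : ℂ) * θ)) with hf
    have hHasSum : ∀ θ : ℝ, HasSum (fun k => f k θ)
        (((A + w θ) / (1 + (starRingEnd ℂ) (w θ) * A))^(q+1)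
          * Complex.exp (Complex.I * (((-l : ℤ)) : ℂ) * θ)) := by
      intro θ
      have h1 := hasSum_choose_mul_geometric_of_norm_lt_one q (hxlt θ)
      have h2 := h1.mul_right ((A + w θ)^(q+1) * Complex.exp (Complex.I * (((-l : ℤ)) : ℂ) * θ))
      have hd : (1 - x θ) = 1 + (starRingEnd ℂ) (w θ) * A := by
        rw [show x θ = -((starRingEnd ℂ) (w θ) * A) from rfl]; ring
      have hval : 1/(1 - x θ)^(q+1)
            * ((A + w θ)^(q+1) * Complex.exp (Complex.I * (((-l : ℤ)) : ℂ) * θ))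
          = ((A + w θ) / (1 + (starRingEnd ℂ) (w θ) * A))^(q+1)
            * Complex.exp (Complex.I * (((-l : ℤ)) : ℂ) * θ) := by
        rw [← hd, div_pow, one_div]
        ring
      exact hval ▸ h2
    have hfint : ∀ k, IntegrableOn (f k) (Set.Icc (0:ℝ) (2*π)) := by
      intro k
      apply Continuous.integrableOn_Icc
      rw [hf]
      apply Continuous.mul
      · apply Continuous.mul continuous_const
        apply Continuous.pow
        rw [hx]
        apply Continuous.neg
        apply Continuous.mul _ continuous_const
        rw [hw]
        exact Complex.continuous_conj.comp (by fun_prop)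
      · fun_prop
    have hnormb : ∀ k θ, ‖f k θ‖ ≤ ((k + q).choose q : ℝ) * r^k * (1+r)^(q+1) := by
      intro k θ
      rw [hf]
      simp only [norm_mul, norm_pow, Complex.norm_natCast]
      rw [norm_exp_I_mul θ (-l), mul_one]
      have h1 : ‖A + w θ‖ ≤ 1 + r := by
        refine (norm_add_le _ _).trans ?_
        rw [hwnorm θ]
        exact add_le_add hA le_rfl
      have h2 : ‖x θ‖ ≤ r := hxnorm θ
      gcongr
    have hsumB : Summable (fun k : ℕ => (2*π) * (((k + q).choose q : ℝ) * r^k * (1+r)^(q+1))) := by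
      have : Summable (fun k : ℕ => ((k + q).choose q : ℝ) * r^k) := by
        apply summable_choose_mul_geometric_of_norm_lt_one q
        rw [Real.norm_eq_abs, _root_.abs_of_nonneg hr0]
        exact hr1
      simpa [mul_assoc, mul_comm, mul_left_comm] using ((this.mul_right ((1+r)^(q+1))).mul_left (2*π))
    have hsum_int : Summable (fun k => ∫ θ in Set.Icc (0:ℝ) (2*π), ‖f k θ‖) := by
      apply Summable.of_nonneg_of_le
        (fun k => integral_nonneg (fun θ => norm_nonneg _)) ?_ hsumB
      intro k
      calc ∫ θ in Set.Icc (0:ℝ) (2*π), ‖f k θ‖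
          ≤ ∫ _θ in Set.Icc (0:ℝ) (2*π), ((k + q).choose q : ℝ) * r^k * (1+r)^(q+1) := by
            apply setIntegral_mono_on (hfint k).norm (integrableOn_const measure_Icc_lt_top.ne)
              measurableSet_Icc
            exact fun θ _ => hnormb k θ
        _ = (2*π) * (((k + q).choose q : ℝ) * r^k * (1+r)^(q+1)) := by
            rw [setIntegral_const, Real.volume_real_Icc, smul_eq_mul]
            rw [sub_zero, max_eq_left (by positivity)]
    have hkey := hasSum_integral_of_summable_integral_norm
      (μ := (volume : Measure ℝ).restrict (Set.Icc (0:ℝ) (2*π))) hfint hsum_int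
    have htsum : (fun θ : ℝ => ∑' k, f k θ)
        = fun θ => ((A + w θ) / (1 + (starRingEnd ℂ) (w θ) * A))^(q+1)
            * Complex.exp (Complex.I * (((-l : ℤ)) : ℂ) * θ) :=
      funext fun θ => (hHasSum θ).tsum_eq
    rw [htsum] at hkey
    -- compute each integral
    have hconj : ∀ θ : ℝ, (starRingEnd ℂ) (w θ) = (r:ℂ) * Complex.exp (-(Complex.I * (θ:ℂ))) := by
      intro θ
      rw [hw]
      rw [map_mul, Complex.conj_ofReal, ← Complex.exp_conj]
      congr 1
      rw [map_mul, Complex.conj_I, Complex.conj_ofReal]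
      ring
    have hfk : ∀ (k : ℕ) (θ : ℝ), f k θ
        = (((k + q).choose q : ℂ) * (-1)^k * (r:ℂ)^k * A^k)
          * ((A + w θ)^(q+1) * Complex.exp (Complex.I * (((-(l + k)) : ℤ) : ℂ) * θ)) := by
      intro k θ
      have e1 : x θ ^ k
          = (-1:ℂ)^k * (r:ℂ)^k * A^k * Complex.exp (Complex.I * (((-(k:ℤ)) : ℤ) : ℂ) * θ) := by
        rw [show x θ = -((r:ℂ) * Complex.exp (-(Complex.I * (θ:ℂ))) * A) from by
          rw [show x θ = -((starRingEnd ℂ) (w θ) * A) from rfl, hconj θ]]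
        rw [neg_pow, mul_pow, mul_pow, ← Complex.exp_nat_mul]
        rw [show ((k:ℂ) * -(Complex.I * (θ:ℂ))) = Complex.I * (((-(k:ℤ)) : ℤ) : ℂ) * θ by
          push_cast; ring]
        ring
      have e2 : Complex.exp (Complex.I * (((-(k:ℤ)) : ℤ) : ℂ) * θ)
            * Complex.exp (Complex.I * (((-l : ℤ)) : ℂ) * θ)
          = Complex.exp (Complex.I * (((-(l + k)) : ℤ) : ℂ) * θ) := by
        rw [← Complex.exp_add]
        congr 1
        push_cast
        ring
      calc f k θ = (((k + q).choose q : ℕ) : ℂ) * (x θ)^k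
          * ((A + w θ)^(q+1) * Complex.exp (Complex.I * (((-l : ℤ)) : ℂ) * θ)) := rfl
        _ = _ := by rw [e1, ← e2]; ring
    have hint_fk : ∀ k : ℕ, (∫ θ in Set.Icc (0:ℝ) (2*π), f k θ)
        = (((k + q).choose q : ℂ) * (-1)^k * (r:ℂ)^k * A^k)
          * (if 0 ≤ l + k ∧ l + k ≤ ((q+1:ℕ):ℤ) then
              (((q+1).choose (l+k).toNat : ℂ) * (r:ℂ)^((l+k).toNat) * A^((q+1) - (l+k).toNat))
                * ((2*π:ℝ):ℂ)
            else 0) := by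
      intro k
      rw [show (fun θ => f k θ) = fun θ =>
          (((k + q).choose q : ℂ) * (-1)^k * (r:ℂ)^k * A^k)
          * ((A + w θ)^(q+1) * Complex.exp (Complex.I * (((-(l + k)) : ℤ) : ℂ) * θ)) from
        funext (hfk k)]
      rw [MeasureTheory.integral_const_mul]
      rw [show w = fun θ : ℝ => (r:ℂ) * Complex.exp (Complex.I * (θ:ℂ)) from hw]
      rw [binom_integral (q+1) (l+k) A r]
    rcases le_or_gt l ((q+1 : ℕ) : ℤ) with hl | hl
    · rw [if_pos hl]
      have hfk2 : (fun k : ℕ => ∫ θ in Set.Icc (0:ℝ) (2*π), f k θ)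
          = fun k => stuff k * A^(((q+1:ℕ):ℤ) - l).toNat := by
        funext k
        rw [hint_fk k]
        simp only [hstuff]
        rcases em (0 ≤ l + k ∧ l + k ≤ ((q+1:ℕ):ℤ)) with hc | hc
        · rw [if_pos hc, if_pos hc]
          have hexp : k + ((q+1) - (l+k).toNat) = (((q+1:ℕ):ℤ) - l).toNat := by omega
          rw [← hexp, pow_add]
          ring
        · rw [if_neg hc, if_neg hc]
          ring
      rw [hfk2] at hkey
      have := hkey.tsum_eq
      rw [tsum_mul_right] at this
      exact this.symm
    · rw [if_neg (not_le.2 hl)]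
      have hfk3 : (fun k : ℕ => ∫ θ in Set.Icc (0:ℝ) (2*π), f k θ) = fun _ => (0:ℂ) := by
        funext k
        rw [hint_fk k]
        rw [if_neg (by omega), mul_zero]
      rw [hfk3] at hkey
      exact hkey.unique hasSum_zero

lemma box_integral_succ (n : ℕ) (f : (Fin (n+1) → ℝ) → ℂ) (hf : Continuous f) :
    ∫ θ : Fin (n+1) → ℝ in Set.univ.pi fun _ => Set.Icc (0:ℝ) (2*π), f θ
      = ∫ y : Fin n → ℝ in Set.univ.pi fun _ => Set.Icc (0:ℝ) (2*π),
          ∫ x in Set.Icc (0:ℝ) (2*π), f (Fin.cons x y) := by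
  have hmeas : MeasurableSet (Set.univ.pi fun _ : Fin (n+1) => Set.Icc (0:ℝ) (2*π)) :=
    MeasurableSet.univ_pi fun _ => measurableSet_Icc
  have hcomp : IsCompact (Set.univ.pi fun _ : Fin (n+1) => Set.Icc (0:ℝ) (2*π)) :=
    isCompact_univ_pi fun _ => isCompact_Icc
  have hint : Integrable ((Set.univ.pi fun _ : Fin (n+1) => Set.Icc (0:ℝ) (2*π)).indicator f) := by
    rw [integrable_indicator_iff hmeas]
    exact hf.continuousOn.integrableOn_compact hcomp
  rw [← integral_indicator hmeas]
  have hmp := (measurePreserving_piFinSuccAbove (fun _ : Fin (n+1) => (volume : Measure ℝ)) 0).symm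
  calc ∫ θ, (Set.univ.pi fun _ : Fin (n+1) => Set.Icc (0:ℝ) (2*π)).indicator f θ
      = ∫ z : ℝ × (Fin n → ℝ),
          (Set.univ.pi fun _ : Fin (n+1) => Set.Icc (0:ℝ) (2*π)).indicator f
            ((MeasurableEquiv.piFinSuccAbove (fun _ : Fin (n+1) => ℝ) 0).symm z)
          ∂((volume : Measure ℝ).prod (Measure.pi fun _ : Fin n => (volume : Measure ℝ))) := by
        rw [volume_pi, ← hmp.integral_comp']
    _ = ∫ y : Fin n → ℝ, ∫ x : ℝ,
          (Set.univ.pi fun _ : Fin (n+1) => Set.Icc (0:ℝ) (2*π)).indicator f (Fin.cons x y)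
          ∂(volume : Measure ℝ) ∂(Measure.pi fun _ : Fin n => (volume : Measure ℝ)) := by
        have hint2 : Integrable ((Set.univ.pi fun _ : Fin (n+1) => Set.Icc (0:ℝ) (2*π)).indicator f)
            (Measure.pi fun _ : Fin (n+1) => (volume : Measure ℝ)) := by rwa [← volume_pi]
        have key := integral_prod_symm
          (((Set.univ.pi fun _ : Fin (n+1) => Set.Icc (0:ℝ) (2*π)).indicator f) ∘
            ((MeasurableEquiv.piFinSuccAbove (fun _ : Fin (n+1) => ℝ) 0).symm))
          ((hmp.integrable_comp_emb (MeasurableEquiv.measurableEmbedding _)).mpr hint2)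
        simp only [Function.comp_apply] at key
        rw [key]
        simp_rw [MeasurableEquiv.piFinSuccAbove_symm_apply, Fin.insertNthEquiv,
            Fin.insertNth_zero, Equiv.coe_fn_mk, cast_eq]
    _ = ∫ y : Fin n → ℝ in Set.univ.pi fun _ : Fin n => Set.Icc (0:ℝ) (2*π),
          ∫ x in Set.Icc (0:ℝ) (2*π), f (Fin.cons x y) := by
        rw [← volume_pi, ← integral_indicator (MeasurableSet.univ_pi fun _ => measurableSet_Icc)]
        congr 1
        funext y
        have hmem : ∀ x : ℝ, (Fin.cons x y ∈ Set.univ.pi fun _ : Fin (n+1) => Set.Icc (0:ℝ) (2*π))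
            ↔ (x ∈ Set.Icc (0:ℝ) (2*π) ∧ y ∈ Set.univ.pi fun _ : Fin n => Set.Icc (0:ℝ) (2*π)) := by
          intro x
          constructor
          · intro h
            exact ⟨h 0 trivial, fun j _ => by simpa using h j.succ trivial⟩
          · rintro ⟨h1, h2⟩ j _
            refine Fin.cases ?_ (fun i => ?_) j
            · simpa using h1
            · simpa using h2 i trivial
        rcases em (y ∈ Set.univ.pi fun _ : Fin n => Set.Icc (0:ℝ) (2*π)) with hy | hy
        · rw [Set.indicator_of_mem hy, ← integral_indicator measurableSet_Icc]
          congr 1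
          funext x
          rcases em (x ∈ Set.Icc (0:ℝ) (2*π)) with hx | hx
          · rw [Set.indicator_of_mem ((hmem x).2 ⟨hx, hy⟩), Set.indicator_of_mem hx]
          · rw [Set.indicator_of_notMem (fun h => hx ((hmem x).1 h).1),
              Set.indicator_of_notMem hx]
        · rw [Set.indicator_of_notMem hy]
          have : (fun x : ℝ => (Set.univ.pi fun _ : Fin (n+1) => Set.Icc (0:ℝ) (2*π)).indicator f
              (Fin.cons x y)) = fun _ => 0 := by
            funext x
            exact Set.indicator_of_notMem (fun h => hy ((hmem x).1 h).2) _
          rw [this, integral_zero]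

lemma mainAux (n : ℕ) (p : ℕ) (l : Fin n → ℤ) (r : Fin n → ℝ)
    (hr : ∀ j, 0 ≤ r j ∧ r j < 1)
    (hG : (∫ θ : Fin n → ℝ in Set.univ.pi fun _ => Set.Icc (0:ℝ) (2*π),
        (Phi n fun j => (r j : ℂ) * Complex.exp (Complex.I * (θ j : ℂ)))^p
          * Complex.exp (-Complex.I * ∑ j, (l j : ℂ) * (θ j : ℂ))) ≠ 0) :
    (∀ j : ℕ, j ≤ n → (∑ i ∈ Finset.range j, if h : i < n then l ⟨i, h⟩ else 0) ≤ (p:ℤ)) ∧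
    (∑ i ∈ Finset.range n, if h : i < n then l ⟨i, h⟩ else 0) = (p:ℤ) ∧
    (∀ j : ℕ, j < n → (∑ i ∈ Finset.range j, if h : i < n then l ⟨i, h⟩ else 0) = (p:ℤ) →
      (∑ i ∈ Finset.range (j+1), if h : i < n then l ⟨i, h⟩ else 0) = (p:ℤ)) := by
  induction n generalizing p with
  | zero =>
    have hbox : (Set.univ.pi fun _ : Fin 0 => Set.Icc (0:ℝ) (2*π)) = Set.univ := by
      ext x; simp
    rw [hbox, Measure.restrict_univ] at hG
    have hfun : (fun θ : Fin 0 → ℝ =>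
        (Phi 0 fun j => (r j : ℂ) * Complex.exp (Complex.I * (θ j : ℂ)))^p
          * Complex.exp (-Complex.I * ∑ j, (l j : ℂ) * (θ j : ℂ)))
        = fun _ => (0:ℂ)^p := by
      funext θ
      simp [Phi]
    rw [hfun, integral_const] at hG
    have hp : p = 0 := by
      by_contra hp
      rw [zero_pow hp] at hG
      simp at hG
    subst hp
    refine ⟨fun j hj => ?_, ?_, fun j hj => absurd hj (Nat.not_lt_zero j)⟩
    · interval_cases j
      simp
    · simp
  | succ n ih =>
    -- notation
    set T : (Fin n → ℝ) → ℂ :=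
      fun y => Phi n fun j => (r j.succ : ℂ) * Complex.exp (Complex.I * (y j : ℂ)) with hT
    obtain ⟨c, hc0, hcJ⟩ := keyJ p (l 0) (r 0) (hr 0).1 (hr 0).2
    set N : ℕ := ((p:ℤ) - l 0).toNat with hN
    have hF : Continuous fun θ : Fin (n+1) → ℝ =>
        (Phi (n+1) fun j => (r j : ℂ) * Complex.exp (Complex.I * (θ j : ℂ)))^p
          * Complex.exp (-Complex.I * ∑ j, (l j : ℂ) * (θ j : ℂ)) := by
      apply Continuous.mul
      · exact (phi_continuous (n+1) r hr).pow p
      · fun_prop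
    rw [box_integral_succ n _ hF] at hG
    have hTnorm : ∀ y, ‖T y‖ ≤ 1 := by
      intro y
      apply phi_norm_le
      intro j
      rw [norm_coe_mul_exp _ _ (hr j.succ).1]
      exact (hr j.succ).2.le
    have hsplit : ∀ (x : ℝ) (y : Fin n → ℝ),
        ((Phi (n+1) fun j => (r j : ℂ) * Complex.exp (Complex.I * ((Fin.cons x y : Fin (n+1) → ℝ) j : ℂ)))^p
          * Complex.exp (-Complex.I * ∑ j : Fin (n+1), (l j : ℂ) * ((Fin.cons x y : Fin (n+1) → ℝ) j : ℂ)))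
        = (((T y + (r 0 : ℂ) * Complex.exp (Complex.I * (x:ℂ)))
            / (1 + (starRingEnd ℂ) ((r 0 : ℂ) * Complex.exp (Complex.I * (x:ℂ))) * T y))^p
          * Complex.exp (Complex.I * (((-(l 0) : ℤ)) : ℂ) * x))
          * Complex.exp (-Complex.I * ∑ j : Fin n, (l j.succ : ℂ) * (y j : ℂ)) := by
      intro x y
      have harg : (fun j : Fin n =>
          (r j.succ : ℂ) * Complex.exp (Complex.I * ((Fin.cons x y : Fin (n+1) → ℝ) j.succ : ℂ)))
          = fun j : Fin n => (r j.succ : ℂ) * Complex.exp (Complex.I * (y j : ℂ)) := by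
        funext j
        rw [Fin.cons_succ]
      have hphi : (Phi (n+1) fun j => (r j : ℂ) * Complex.exp (Complex.I * ((Fin.cons x y : Fin (n+1) → ℝ) j : ℂ)))
          = (T y + (r 0 : ℂ) * Complex.exp (Complex.I * (x:ℂ)))
            / (1 + (starRingEnd ℂ) ((r 0 : ℂ) * Complex.exp (Complex.I * (x:ℂ))) * T y) := by
        show (Phi n _ + _) / (1 + (starRingEnd ℂ) _ * Phi n _) = _
        rw [show ((fun j : Fin (n+1) => (r j : ℂ) * Complex.exp (Complex.I * ((Fin.cons x y : Fin (n+1) → ℝ) j : ℂ))) ∘ Fin.succ)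
            = fun j : Fin n => (r j.succ : ℂ) * Complex.exp (Complex.I * (y j : ℂ)) from harg]
        simp only [Fin.cons_zero]
        rfl
      rw [hphi]
      have hexp : Complex.exp (-Complex.I * ∑ j : Fin (n+1), (l j : ℂ) * ((Fin.cons x y : Fin (n+1) → ℝ) j : ℂ))
          = Complex.exp (Complex.I * (((-(l 0) : ℤ)) : ℂ) * x)
            * Complex.exp (-Complex.I * ∑ j : Fin n, (l j.succ : ℂ) * (y j : ℂ)) := by
        rw [← Complex.exp_add]
        congr 1
        rw [Fin.sum_univ_succ]
        rw [show (Fin.cons x y : Fin (n+1) → ℝ) 0 = x from rfl]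
        have : ∀ j : Fin n, ((l j.succ : ℂ) * ((Fin.cons x y : Fin (n+1) → ℝ) j.succ : ℂ))
            = (l j.succ : ℂ) * (y j : ℂ) := by
          intro j; rw [Fin.cons_succ]
        rw [Finset.sum_congr rfl fun j _ => this j]
        push_cast
        ring
      rw [hexp]
      ring
    have hinner : ∀ y : Fin n → ℝ,
        (∫ x in Set.Icc (0:ℝ) (2*π),
          (Phi (n+1) fun j => (r j : ℂ) * Complex.exp (Complex.I * ((Fin.cons x y : Fin (n+1) → ℝ) j : ℂ)))^p
            * Complex.exp (-Complex.I * ∑ j : Fin (n+1), (l j : ℂ) * ((Fin.cons x y : Fin (n+1) → ℝ) j : ℂ)))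
        = (if l 0 ≤ (p:ℤ) then c * (T y)^N else 0)
            * Complex.exp (-Complex.I * ∑ j : Fin n, (l j.succ : ℂ) * (y j : ℂ)) := by
      intro y
      rw [show (fun x : ℝ =>
          (Phi (n+1) fun j => (r j : ℂ) * Complex.exp (Complex.I * ((Fin.cons x y : Fin (n+1) → ℝ) j : ℂ)))^p
            * Complex.exp (-Complex.I * ∑ j : Fin (n+1), (l j : ℂ) * ((Fin.cons x y : Fin (n+1) → ℝ) j : ℂ)))
          = fun x : ℝ =>
          (((T y + (r 0 : ℂ) * Complex.exp (Complex.I * (x:ℂ)))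
            / (1 + (starRingEnd ℂ) ((r 0 : ℂ) * Complex.exp (Complex.I * (x:ℂ))) * T y))^p
          * Complex.exp (Complex.I * (((-(l 0) : ℤ)) : ℂ) * x))
          * Complex.exp (-Complex.I * ∑ j : Fin n, (l j.succ : ℂ) * (y j : ℂ)) from
        funext fun x => hsplit x y]
      rw [MeasureTheory.integral_mul_const]
      rw [hcJ (T y) (hTnorm y)]
    rw [show (fun y : Fin n → ℝ => ∫ x in Set.Icc (0:ℝ) (2*π),
          (Phi (n+1) fun j => (r j : ℂ) * Complex.exp (Complex.I * ((Fin.cons x y : Fin (n+1) → ℝ) j : ℂ)))^p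
            * Complex.exp (-Complex.I * ∑ j : Fin (n+1), (l j : ℂ) * ((Fin.cons x y : Fin (n+1) → ℝ) j : ℂ)))
        = fun y : Fin n → ℝ => (if l 0 ≤ (p:ℤ) then c * (T y)^N else 0)
            * Complex.exp (-Complex.I * ∑ j : Fin n, (l j.succ : ℂ) * (y j : ℂ)) from
      funext hinner] at hG
    -- case l 0 > p impossible
    have hl0 : l 0 ≤ (p:ℤ) := by
      by_contra hl0
      apply hG
      rw [show (fun y : Fin n → ℝ => (if l 0 ≤ (p:ℤ) then c * (T y)^N else 0)
            * Complex.exp (-Complex.I * ∑ j : Fin n, (l j.succ : ℂ) * (y j : ℂ)))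
          = fun _ => (0:ℂ) from funext fun y => by rw [if_neg hl0, zero_mul]]
      exact integral_zero _ _
    simp only [if_pos hl0] at hG
    have hG2 : c * (∫ y : Fin n → ℝ in Set.univ.pi fun _ => Set.Icc (0:ℝ) (2*π),
        (T y)^N * Complex.exp (-Complex.I * ∑ j : Fin n, (l j.succ : ℂ) * (y j : ℂ))) ≠ 0 := by
      have hassoc : (fun y : Fin n → ℝ => c * (T y)^N
            * Complex.exp (-Complex.I * ∑ j : Fin n, (l j.succ : ℂ) * (y j : ℂ)))
          = fun y : Fin n → ℝ => c * ((T y)^N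
            * Complex.exp (-Complex.I * ∑ j : Fin n, (l j.succ : ℂ) * (y j : ℂ))) :=
        funext fun y => mul_assoc _ _ _
      rw [hassoc, MeasureTheory.integral_const_mul] at hG
      exact hG
    have hc : c ≠ 0 := fun h => hG2 (by rw [h, zero_mul])
    have hGn : (∫ y : Fin n → ℝ in Set.univ.pi fun _ => Set.Icc (0:ℝ) (2*π),
        (T y)^N * Complex.exp (-Complex.I * ∑ j : Fin n, (l j.succ : ℂ) * (y j : ℂ))) ≠ 0 :=
      fun h => hG2 (by rw [h, mul_zero])
    obtain ⟨ih1, ih2, ih3⟩ := ih N (fun j => l j.succ) (fun j => r j.succ) (fun j => hr j.succ) hGn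
    have hNZ : (N : ℤ) = (p:ℤ) - l 0 := by
      rw [hN]
      omega
    -- partial sum relation
    have hS : ∀ j : ℕ, j ≤ n →
        (∑ i ∈ Finset.range (j+1), if h : i < n+1 then l ⟨i, h⟩ else 0)
        = l 0 + ∑ i ∈ Finset.range j, (if h : i < n then l (⟨i, h⟩ : Fin n).succ else 0) := by
      intro j hj
      rw [Finset.sum_range_succ']
      rw [add_comm]
      congr 1
      · apply Finset.sum_congr rfl
        intro i hi
        have hi' : i < j := Finset.mem_range.1 hi
        rw [dif_pos (by omega : i + 1 < n + 1), dif_pos (by omega : i < n)]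
        rfl
    refine ⟨?_, ?_, ?_⟩
    · intro j hj
      rcases Nat.eq_zero_or_pos j with rfl | hjpos
      · simp
      · obtain ⟨j', rfl⟩ : ∃ j', j = j' + 1 := ⟨j - 1, by omega⟩
        rw [hS j' (by omega)]
        have := ih1 j' (by omega)
        omega
    · rw [hS n le_rfl]
      omega
    · intro j hj hsum
      rcases Nat.eq_zero_or_pos j with rfl | hjpos
      · -- p = 0 case
        simp only [Finset.range_zero, Finset.sum_empty] at hsum
        have hp0 : p = 0 := by omega
        have hl00 : l 0 = 0 := by
          by_contra hne
          exact hc (hc0 hp0 hne)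
        rw [hS 0 (by omega)]
        simp only [Finset.range_zero, Finset.sum_empty, add_zero, hl00]
        omega
      · obtain ⟨j', rfl⟩ : ∃ j', j = j' + 1 := ⟨j - 1, by omega⟩
        rw [hS j' (by omega)] at hsum
        rw [hS (j'+1) (by omega)]
        have := ih3 j' (by omega) (by omega)
        omega

/-- let `n ≥ 1` and `l ∈ ℤⁿ`, and for `r ∈ [0,1)ⁿ` let `g_l(r)` be the
`l`-th Fourier coefficient in the angular variables `θ` of
`θ ↦ Ψ((r₁e^{iθ₁},…,rₙe^{iθₙ}),(1,…,1))`.  If `g_l(r) ≠ 0` for some `r ∈ [0,1)ⁿ`, then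
(i) `l₁ + ⋯ + l_j ≤ 1` for all `1 ≤ j ≤ n`; (ii) `l₁ + ⋯ + lₙ = 1`; and (iii) for
`1 ≤ j ≤ n-1`, if `l₁ + ⋯ + l_j = 1` then `l₁ + ⋯ + l_{j+1} = 1`. -/
theorem statement15 (n : ℕ) (hn : 1 ≤ n) (l : Fin n → ℤ)
    (hg : ∃ r : Fin n → ℝ, (∀ j, 0 ≤ r j ∧ r j < 1) ∧
      ((1 / (2 * Real.pi) ^ n : ℝ) •
        ∫ θ : Fin n → ℝ in Set.univ.pi fun _ => Set.Icc (0 : ℝ) (2 * Real.pi),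
          PsiList (List.ofFn fun j : Fin n =>
              ((r j : ℂ) * Complex.exp (Complex.I * (θ j : ℂ)), 1)) *
            Complex.exp (-Complex.I * ∑ j : Fin n, (l j : ℂ) * (θ j : ℂ))) ≠ 0) :
    (∀ j : ℕ, 1 ≤ j → j ≤ n →
      (∑ i ∈ Finset.range j, if h : i < n then l ⟨i, h⟩ else 0) ≤ 1) ∧
    (∑ i ∈ Finset.range n, if h : i < n then l ⟨i, h⟩ else 0) = 1 ∧
    (∀ j : ℕ, 1 ≤ j → j ≤ n - 1 →
      (∑ i ∈ Finset.range j, if h : i < n then l ⟨i, h⟩ else 0) = 1 →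
      (∑ i ∈ Finset.range (j + 1), if h : i < n then l ⟨i, h⟩ else 0) = 1) := by
  obtain ⟨r, hr, hne⟩ := hg
  have hI : (∫ θ : Fin n → ℝ in Set.univ.pi fun _ => Set.Icc (0 : ℝ) (2 * Real.pi),
      PsiList (List.ofFn fun j : Fin n =>
          ((r j : ℂ) * Complex.exp (Complex.I * (θ j : ℂ)), 1)) *
        Complex.exp (-Complex.I * ∑ j : Fin n, (l j : ℂ) * (θ j : ℂ))) ≠ 0 := by
    intro h
    rw [h, smul_zero] at hne
    exact hne rfl
  rw [show (fun θ : Fin n → ℝ =>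
      PsiList (List.ofFn fun j : Fin n =>
          ((r j : ℂ) * Complex.exp (Complex.I * (θ j : ℂ)), 1)) *
        Complex.exp (-Complex.I * ∑ j : Fin n, (l j : ℂ) * (θ j : ℂ)))
      = fun θ : Fin n → ℝ =>
        (Phi n fun j => (r j : ℂ) * Complex.exp (Complex.I * (θ j : ℂ)))^(1:ℕ) *
        Complex.exp (-Complex.I * ∑ j : Fin n, (l j : ℂ) * (θ j : ℂ)) from
    funext fun θ => by rw [psiList_eq_phi n, pow_one]] at hI
  obtain ⟨m1, m2, m3⟩ := mainAux n 1 l r hr hI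
  refine ⟨fun j _ hj => ?_, ?_, fun j hj1 hj2 hsum => ?_⟩
  · have := m1 j hj
    omega
  · have := m2
    omega
  · have hjn : j < n := by omega
    have := m3 j hjn (by omega)
    omega
end
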